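/- In the plane, for every n ≥ 1, the number of distinct line traces in the grid C^2_n is at most (2n)^5. -/

import Mathlib

open Set

/-- `L` is a line in `ℝ^d`. -/
def IsLine {d : ℕ} (L : Set (Fin d → ℝ)) : Prop :=
  ∃ p v : Fin d → ℝ, v ≠ 0 ∧ L = {x | ∃ c : ℝ, x = p + c • v}

/-- The grid cube `C^d_n(t) = ∏ [t i / n, (t i + 1)/n]`. -/
def gridCube {d : ℕ} (n : ℕ) (t : Fin d → ℤ) : Set (Fin d → ℝ) :=
  {x | ∀ i, (t i : ℝ) / n ≤ x i ∧ x i ≤ ((t i : ℝ) + 1) / n}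

/-- The line trace of `L` in the grid `𝒞^d_n`: the indices `t` (with `0 ≤ t i < n`)
of grid cubes intersected by `L`. -/
def lineTrace {d : ℕ} (n : ℕ) (L : Set (Fin d → ℝ)) : Set (Fin d → ℤ) :=
  {t | (∀ i, 0 ≤ t i ∧ t i < (n : ℤ)) ∧ (gridCube n t ∩ L).Nonempty}

/-- The collection of all line traces in the grid `𝒞^d_n`. -/
def lineTraces (d n : ℕ) : Set (Set (Fin d → ℤ)) :=
  {S | S.Nonempty ∧ ∃ L : Set (Fin d → ℝ), IsLine L ∧ S = lineTrace n L}

-- ### Auxiliary material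

section AuxLineTraces

set_option linter.unusedSectionVars false
set_option maxHeartbeats 1000000

variable {ι : Type*} {E : Type*} [AddCommGroup E] [Module ℝ E]

open Classical in
noncomputable def patE (f : ι → E → ℝ) (s : Finset ι) (x : E) : ι → SignType :=
  fun i => if i ∈ s then SignType.sign (f i x) else 0

lemma sign_comb {p q r t : ℝ} (h0 : 0 ≤ t) (h1 : t ≤ 1) (hr : r = p + t * (q - p))
    (h : SignType.sign p = SignType.sign q) : SignType.sign r = SignType.sign p := by
  rcases lt_trichotomy p 0 with hp | hp | hp
  · have hq : q < 0 := by
      by_contra hq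
      rcases eq_or_lt_of_le (not_lt.mp hq) with h' | h'
      · rw [sign_neg hp, ← h', sign_zero] at h; exact absurd h (by decide)
      · rw [sign_neg hp, sign_pos h'] at h; exact absurd h (by decide)
    have : r < 0 := by rcases le_total p q with hh | hh <;> nlinarith
    rw [sign_neg this, sign_neg hp]
  · subst hp
    have hq : q = 0 := by rw [← sign_eq_zero_iff (a := q), ← h, sign_zero]
    rw [hq] at hr; simp [hr]
  · have hq : 0 < q := by
      by_contra hq
      rcases eq_or_lt_of_le (not_lt.mp hq) with h' | h'
      · rw [sign_pos hp, h', sign_zero] at h; exact absurd h (by decide)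
      · rw [sign_pos hp, sign_neg h'] at h; exact absurd h (by decide)
    have : 0 < r := by rcases le_total p q with hh | hh <;> nlinarith
    rw [sign_pos this, sign_pos hp]

open Classical in
lemma patE_insert (f : ι → E → ℝ) (s : Finset ι) (i₀ : ι) (hi₀ : i₀ ∉ s) (x : E) :
    patE f (insert i₀ s) x = Function.update (patE f s x) i₀ (SignType.sign (f i₀ x)) := by
  funext i
  by_cases hi : i = i₀
  · subst hi; simp [patE, Function.update_self]
  · simp [patE, Function.update_of_ne hi, Finset.mem_insert, hi]

open Classical in
lemma patE_step (f : ι → E → ℝ)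
    (hf : ∀ i (x y : E) (t : ℝ), f i (x + t • (y - x)) = f i x + t * (f i y - f i x))
    (s : Finset ι) (i₀ : ι) (hi₀ : i₀ ∉ s)
    (hS : (Set.range (patE f s)).Finite) :
    (Set.range (patE f (insert i₀ s))).Finite ∧
      (Set.range (patE f (insert i₀ s))).ncard ≤
        (Set.range (patE f s)).ncard + 2 * (patE f s '' {x | f i₀ x = 0}).ncard := by
  set g := patE f s with hg
  set Z := g '' {x | f i₀ x = 0} with hZdef
  set Sp := g '' {x | 0 < f i₀ x} with hSp
  set Sm := g '' {x | f i₀ x < 0} with hSm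
  have hZS : Z ⊆ Set.range g := image_subset_range _ _
  have hSpS : Sp ⊆ Set.range g := image_subset_range _ _
  have hSmS : Sm ⊆ Set.range g := image_subset_range _ _
  have hZfin : Z.Finite := hS.subset hZS
  have hSpfin : Sp.Finite := hS.subset hSpS
  have hSmfin : Sm.Finite := hS.subset hSmS
  have hsub : Set.range (patE f (insert i₀ s)) ⊆
      ((fun σ => Function.update σ i₀ 0) '' Z ∪ (fun σ => Function.update σ i₀ 1) '' Sp)
        ∪ (fun σ => Function.update σ i₀ (-1)) '' Sm := by
    rintro _ ⟨x, rfl⟩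
    rw [patE_insert f s i₀ hi₀ x]
    rcases lt_trichotomy (f i₀ x) 0 with h | h | h
    · exact Or.inr ⟨g x, ⟨x, h, rfl⟩, by rw [sign_neg h]⟩
    · exact Or.inl (Or.inl ⟨g x, ⟨x, h, rfl⟩, by rw [h, sign_zero]⟩)
    · exact Or.inl (Or.inr ⟨g x, ⟨x, h, rfl⟩, by rw [sign_pos h]⟩)
  have hsplit : Sp ∩ Sm ⊆ Z := by
    rintro σ ⟨⟨x, hx, rfl⟩, ⟨y, hy, hxy⟩⟩
    simp only [mem_setOf_eq] at hx hy
    have hd : 0 < f i₀ x - f i₀ y := by linarith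
    set t := f i₀ x / (f i₀ x - f i₀ y) with ht
    have ht0 : 0 ≤ t := div_nonneg hx.le hd.le
    have ht1 : t ≤ 1 := (div_le_one hd).2 (by linarith)
    refine ⟨x + t • (y - x), ?_, ?_⟩
    · show f i₀ (x + t • (y - x)) = 0
      rw [hf, ht]
      field_simp
      ring
    · funext i
      by_cases hi : i ∈ s
      · have hsx : SignType.sign (f i x) = SignType.sign (f i y) := by
          have := congrFun hxy i
          simpa [hg, patE, hi] using this.symm
        simp only [hg, patE, if_pos hi]
        exact sign_comb ht0 ht1 (hf i x y t) hsx
      · simp [hg, patE, hi]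
  have hUfin : (((fun σ => Function.update σ i₀ (0:SignType)) '' Z
      ∪ (fun σ => Function.update σ i₀ 1) '' Sp)
      ∪ (fun σ => Function.update σ i₀ (-1)) '' Sm).Finite :=
    ((hZfin.image _).union (hSpfin.image _)).union (hSmfin.image _)
  constructor
  · exact hUfin.subset hsub
  · have h1 := Set.ncard_le_ncard hsub hUfin
    have h2 := Set.ncard_union_le (((fun σ => Function.update σ i₀ (0:SignType)) '' Z
      ∪ (fun σ => Function.update σ i₀ 1) '' Sp)) ((fun σ => Function.update σ i₀ (-1)) '' Sm)
    have h3 := Set.ncard_union_le ((fun σ => Function.update σ i₀ (0:SignType)) '' Z)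
      ((fun σ => Function.update σ i₀ 1) '' Sp)
    have hi1 := Set.ncard_image_le (f := fun σ => Function.update σ i₀ (0:SignType)) hZfin
    have hi2 := Set.ncard_image_le (f := fun σ => Function.update σ i₀ (1:SignType)) hSpfin
    have hi3 := Set.ncard_image_le (f := fun σ => Function.update σ i₀ (-1:SignType)) hSmfin
    have h4 := Set.ncard_union_add_ncard_inter Sp Sm hSpfin hSmfin
    have h5 : (Sp ∪ Sm).ncard ≤ (Set.range g).ncard :=
      Set.ncard_le_ncard (union_subset hSpS hSmS) hS
    have h6 : (Sp ∩ Sm).ncard ≤ Z.ncard := Set.ncard_le_ncard hsplit hZfin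
    omega
open Classical in
lemma pat1_bound (α β : ι → ℝ) (s : Finset ι) :
    (Set.range (patE (fun i (u : ℝ) => α i * u + β i) s)).Finite ∧
      (Set.range (patE (fun i (u : ℝ) => α i * u + β i) s)).ncard ≤ 2 * s.card + 1 := by
  induction s using Finset.induction_on with
  | empty =>
    have hsub : Set.range (patE (fun i (u : ℝ) => α i * u + β i) (∅ : Finset ι)) ⊆
        {fun _ => 0} := by
      rintro _ ⟨x, rfl⟩; funext i; simp [patE]
    exact ⟨(Set.finite_singleton _).subset hsub,
      le_trans (Set.ncard_le_ncard hsub (Set.finite_singleton _)) (by simp)⟩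
  | @insert i₀ s hi₀ ih =>
    set f : ι → ℝ → ℝ := fun i u => α i * u + β i with hfdef
    have hf : ∀ i (x y t : ℝ), f i (x + t • (y - x)) = f i x + t * (f i y - f i x) := by
      intro i x y t; simp only [hfdef, smul_eq_mul]; ring
    have hcard : s.card + 1 = (insert i₀ s).card := (Finset.card_insert_of_notMem hi₀).symm
    by_cases hα : α i₀ = 0
    · have hsub : Set.range (patE f (insert i₀ s)) ⊆
          (fun σ => Function.update σ i₀ (SignType.sign (β i₀))) '' Set.range (patE f s) := by
        rintro _ ⟨x, rfl⟩
        refine ⟨patE f s x, ⟨x, rfl⟩, ?_⟩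
        rw [patE_insert f s i₀ hi₀ x]
        simp [hfdef, hα]
      refine ⟨(ih.1.image _).subset hsub, ?_⟩
      have h1 := Set.ncard_le_ncard hsub (ih.1.image _)
      have h2 := Set.ncard_image_le
        (f := fun σ => Function.update σ i₀ (SignType.sign (β i₀))) ih.1
      have h3 := ih.2
      omega
    · have hstep := patE_step f hf s i₀ hi₀ ih.1
      have hZ : (patE f s '' {x | f i₀ x = 0}).ncard ≤ 1 := by
        have hss : {x : ℝ | f i₀ x = 0} ⊆ {-(β i₀) / α i₀} := by
          intro u hu
          simp only [mem_setOf_eq, hfdef] at hu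
          simp only [mem_singleton_iff]
          field_simp
          linarith
        have := Set.ncard_le_ncard (Set.image_mono (f := patE f s) hss)
          ((Set.finite_singleton _).image _)
        rw [Set.image_singleton] at this
        simpa using this
      refine ⟨hstep.1, ?_⟩
      have h1 := hstep.2
      have h2 := ih.2
      omega
open Classical in
lemma pat2_bound (a b c : ι → ℝ) (s : Finset ι) :
    (Set.range (patE (fun i (x : ℝ × ℝ) => a i * x.1 + b i * x.2 + c i) s)).Finite ∧
      (Set.range (patE (fun i (x : ℝ × ℝ) => a i * x.1 + b i * x.2 + c i) s)).ncard ≤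
        2 * s.card * s.card + 1 := by
  induction s using Finset.induction_on with
  | empty =>
    have hsub : Set.range (patE (fun i (x : ℝ × ℝ) => a i * x.1 + b i * x.2 + c i)
        (∅ : Finset ι)) ⊆ {fun _ => 0} := by
      rintro _ ⟨x, rfl⟩; funext i; simp [patE]
    exact ⟨(Set.finite_singleton _).subset hsub,
      le_trans (Set.ncard_le_ncard hsub (Set.finite_singleton _)) (by simp)⟩
  | @insert i₀ s hi₀ ih =>
    set f : ι → ℝ × ℝ → ℝ := fun i x => a i * x.1 + b i * x.2 + c i with hfdef
    have hf : ∀ i (x y : ℝ × ℝ) (t : ℝ), f i (x + t • (y - x)) = f i x + t * (f i y - f i x) := by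
      intro i x y t
      simp only [hfdef, Prod.fst_add, Prod.snd_add, Prod.smul_fst, Prod.smul_snd,
        Prod.fst_sub, Prod.snd_sub, smul_eq_mul]
      ring
    have hcard : s.card + 1 = (insert i₀ s).card := (Finset.card_insert_of_notMem hi₀).symm
    by_cases hab : a i₀ = 0 ∧ b i₀ = 0
    · have hsub : Set.range (patE f (insert i₀ s)) ⊆
          (fun σ => Function.update σ i₀ (SignType.sign (c i₀))) '' Set.range (patE f s) := by
        rintro _ ⟨x, rfl⟩
        refine ⟨patE f s x, ⟨x, rfl⟩, ?_⟩
        rw [patE_insert f s i₀ hi₀ x]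
        simp [hfdef, hab.1, hab.2]
      refine ⟨(ih.1.image _).subset hsub, ?_⟩
      have h1 := Set.ncard_le_ncard hsub (ih.1.image _)
      have h2 := Set.ncard_image_le
        (f := fun σ => Function.update σ i₀ (SignType.sign (c i₀))) ih.1
      have h3 := ih.2
      nlinarith [Finset.card_le_card (Finset.subset_insert i₀ s)]
    · -- zero set of f i₀ is a line; bound Z via the 1-dimensional lemma
      have hstep := patE_step f hf s i₀ hi₀ ih.1
      have hZ : (patE f s '' {x | f i₀ x = 0}).ncard ≤ 2 * s.card + 1 := by
        rcases ne_or_eq (b i₀) 0 with hb | hb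
        · -- parametrize by x.1
          set α' : ι → ℝ := fun i => a i - b i * (a i₀ / b i₀) with hα'
          set β' : ι → ℝ := fun i => c i - b i * (c i₀ / b i₀) with hβ'
          have hps : patE f s '' {x | f i₀ x = 0} ⊆
              Set.range (patE (fun i (u : ℝ) => α' i * u + β' i) s) := by
            rintro _ ⟨x, hx, rfl⟩
            refine ⟨x.1, ?_⟩
            funext i
            by_cases hi : i ∈ s
            · simp only [patE, if_pos hi]
              congr 1
              simp only [mem_setOf_eq, hfdef] at hx
              simp only [hα', hβ', hfdef]
              field_simp
              linear_combination (-(b i)) * hx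
            · simp [patE, hi]
          have h1d := pat1_bound α' β' s
          exact le_trans (Set.ncard_le_ncard hps h1d.1) h1d.2
        · have ha : a i₀ ≠ 0 := fun h => hab ⟨h, hb⟩
          set α' : ι → ℝ := fun i => b i with hα'
          set β' : ι → ℝ := fun i => c i - a i * (c i₀ / a i₀) with hβ'
          have hps : patE f s '' {x | f i₀ x = 0} ⊆
              Set.range (patE (fun i (u : ℝ) => α' i * u + β' i) s) := by
            rintro _ ⟨x, hx, rfl⟩
            refine ⟨x.2, ?_⟩
            funext i
            by_cases hi : i ∈ s
            · simp only [patE, if_pos hi]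
              congr 1
              simp only [mem_setOf_eq, hfdef, hb] at hx
              simp only [hα', hβ', hfdef]
              field_simp
              linear_combination (-(a i)) * hx
            · simp [patE, hi]
          have h1d := pat1_bound α' β' s
          exact le_trans (Set.ncard_le_ncard hps h1d.1) h1d.2
      refine ⟨hstep.1, ?_⟩
      have h1 := hstep.2
      have h2 := ih.2
      nlinarith
-- ## Grid, charts, decoding

lemma sign_congr_pos {k p q : ℝ} (hk : 0 < k) (h : q = k * p) :
    SignType.sign q = SignType.sign p := by
  rw [h, sign_mul, sign_pos hk, one_mul]

lemma sign_congr_neg {k p q : ℝ} (hk : k < 0) (h : q = k * p) :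
    SignType.sign q = -SignType.sign p := by
  rw [h, sign_mul, sign_neg hk, neg_one_mul]

noncomputable def gIdx (n : ℕ) : Finset (ℤ × ℤ) := Finset.Icc 0 (n : ℤ) ×ˢ Finset.Icc 0 (n : ℤ)

lemma gIdx_card (n : ℕ) : (gIdx n).card = (n + 1) * (n + 1) := by
  have : (Finset.Icc 0 (n : ℤ)).card = n + 1 := by
    rw [Int.card_Icc]
    omega
  simp [gIdx, Finset.card_product, this]

lemma mem_gIdx {n : ℕ} {pq : ℤ × ℤ} :
    pq ∈ gIdx n ↔ 0 ≤ pq.1 ∧ pq.1 ≤ n ∧ 0 ≤ pq.2 ∧ pq.2 ≤ n := by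
  simp [gIdx, Finset.mem_product, Finset.mem_Icc]
  tauto

noncomputable def fullpat (n : ℕ) (A B C : ℝ) : ℤ × ℤ → SignType := fun pq =>
  if pq ∈ gIdx n then SignType.sign (A * ((pq.1 : ℝ) / n) + B * ((pq.2 : ℝ) / n) + C) else 0

noncomputable def patP (n : ℕ) : ℝ × ℝ → (ℤ × ℤ) → SignType :=
  patE (fun pq (x : ℝ × ℝ) => ((pq.1 : ℝ) / n) * x.1 + 1 * x.2 + -((pq.2 : ℝ) / n)) (gIdx n)

noncomputable def patV (n : ℕ) : ℝ → (ℤ × ℤ) → SignType :=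
  patE (fun pq (u : ℝ) => 1 * u + ((pq.1 : ℝ) / n)) (gIdx n)

def Omeg (n : ℕ) : Set ((ℤ × ℤ) → SignType) :=
  (Set.range (patP n) ∪ (fun σ => -σ) '' Set.range (patP n)) ∪
    (Set.range (patV n) ∪ (fun σ => -σ) '' Set.range (patV n))

lemma Omeg_spec (n : ℕ) :
    (Omeg n).Finite ∧
      (Omeg n).ncard ≤ 4 * ((n+1)*(n+1)) * ((n+1)*(n+1)) + 4 * ((n+1)*(n+1)) + 4 := by
  have hP := pat2_bound (fun pq : ℤ × ℤ => ((pq.1 : ℝ) / n)) (fun _ => (1 : ℝ))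
    (fun pq : ℤ × ℤ => -((pq.2 : ℝ) / n)) (gIdx n)
  have hV := pat1_bound (fun _ : ℤ × ℤ => (1 : ℝ)) (fun pq : ℤ × ℤ => ((pq.1 : ℝ) / n)) (gIdx n)
  have hPfin : (Set.range (patP n)).Finite := hP.1
  have hVfin : (Set.range (patV n)).Finite := hV.1
  have hPc : (Set.range (patP n)).ncard ≤ 2 * ((n+1)*(n+1)) * ((n+1)*(n+1)) + 1 := by
    have h := hP.2
    rw [gIdx_card] at h
    exact h
  have hVc : (Set.range (patV n)).ncard ≤ 2 * ((n+1)*(n+1)) + 1 := by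
    have h := hV.2
    rw [gIdx_card] at h
    exact h
  refine ⟨(hPfin.union (hPfin.image _)).union (hVfin.union (hVfin.image _)), ?_⟩
  have h1 := Set.ncard_union_le (Set.range (patP n) ∪ (fun σ => -σ) '' Set.range (patP n))
    (Set.range (patV n) ∪ (fun σ => -σ) '' Set.range (patV n))
  have h2 := Set.ncard_union_le (Set.range (patP n)) ((fun σ => -σ) '' Set.range (patP n))
  have h3 := Set.ncard_union_le (Set.range (patV n)) ((fun σ => -σ) '' Set.range (patV n))
  have h4 := Set.ncard_image_le (f := fun σ : (ℤ × ℤ) → SignType => -σ) hPfin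
  have h5 := Set.ncard_image_le (f := fun σ : (ℤ × ℤ) → SignType => -σ) hVfin
  have hgoal : (Omeg n).ncard ≤ (2 * ((n+1)*(n+1)) * ((n+1)*(n+1)) + 1)
      + (2 * ((n+1)*(n+1)) * ((n+1)*(n+1)) + 1) + ((2 * ((n+1)*(n+1)) + 1)
      + (2 * ((n+1)*(n+1)) + 1)) := by
    simp only [Omeg]
    linarith
  calc (Omeg n).ncard ≤ _ := hgoal
    _ = 4 * ((n+1)*(n+1)) * ((n+1)*(n+1)) + 4 * ((n+1)*(n+1)) + 4 := by ring

lemma fullpat_mem (n : ℕ) (hn : 1 ≤ n) {A B C : ℝ} (hAB : A ≠ 0 ∨ B ≠ 0) :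
    fullpat n A B C ∈ Omeg n := by
  have hn0 : (n : ℝ) ≠ 0 := by positivity
  rcases lt_trichotomy B 0 with hB | hB | hB
  · have hBne : B ≠ 0 := ne_of_lt hB
    refine Or.inl (Or.inl ⟨(-A / B, -C / B), ?_⟩)
    funext pq
    simp only [patP, patE, fullpat]
    by_cases h : pq ∈ gIdx n
    · rw [if_pos h, if_pos h]
      exact (sign_congr_pos (k := -B) (by linarith) (by field_simp; ring)).symm
    · rw [if_neg h, if_neg h]
  · have hA : A ≠ 0 := hAB.resolve_right (fun h => h hB)
    rcases hA.lt_or_gt with hA' | hA'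
    · refine Or.inr (Or.inr ⟨patV n (C / A), ⟨C / A, rfl⟩, ?_⟩)
      funext pq
      simp only [patV, patE, fullpat, Pi.neg_apply]
      by_cases h : pq ∈ gIdx n
      · rw [if_pos h, if_pos h]
        exact (sign_congr_neg (k := A) hA' (by rw [hB]; field_simp; ring)).symm
      · rw [if_neg h, if_neg h]; simp
    · refine Or.inr (Or.inl ⟨C / A, ?_⟩)
      funext pq
      simp only [patV, patE, fullpat]
      by_cases h : pq ∈ gIdx n
      · rw [if_pos h, if_pos h]
        exact (sign_congr_pos (k := A) hA' (by rw [hB]; field_simp; ring)).symm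
      · rw [if_neg h, if_neg h]
  · have hBne : B ≠ 0 := ne_of_gt hB
    refine Or.inl (Or.inr ⟨patP n (-A / B, -C / B), ⟨(-A / B, -C / B), rfl⟩, ?_⟩)
    funext pq
    simp only [patP, patE, fullpat, Pi.neg_apply]
    by_cases h : pq ∈ gIdx n
    · rw [if_pos h, if_pos h]
      exact (sign_congr_neg (k := -B) (by linarith) (by field_simp; ring)).symm
    · rw [if_neg h, if_neg h]; simp
-- ## Lines in the plane in normal form

lemma line_rep {L : Set (Fin 2 → ℝ)} (hL : IsLine L) :
    ∃ A B C : ℝ, (A ≠ 0 ∨ B ≠ 0) ∧ L = {x | A * x 0 + B * x 1 + C = 0} := by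
  obtain ⟨p, v, hv, rfl⟩ := hL
  refine ⟨v 1, -(v 0), v 0 * p 1 - v 1 * p 0, ?_, ?_⟩
  · obtain ⟨i, hi⟩ := Function.ne_iff.mp hv
    simp only [Pi.zero_apply] at hi
    fin_cases i
    · exact Or.inr (by simpa using hi)
    · exact Or.inl (by simpa using hi)
  · ext x
    simp only [mem_setOf_eq]
    constructor
    · rintro ⟨c, rfl⟩
      simp only [Pi.add_apply, Pi.smul_apply, smul_eq_mul]
      ring
    · intro hx
      rcases ne_or_eq (v 0) 0 with h0 | h0
      · refine ⟨(x 0 - p 0) / v 0, ?_⟩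
        funext i
        fin_cases i
        · show x 0 = p 0 + (x 0 - p 0) / v 0 * v 0
          field_simp
          ring
        · show x 1 = p 1 + (x 0 - p 0) / v 0 * v 1
          field_simp
          linear_combination -hx
      · have h1 : v 1 ≠ 0 := by
          obtain ⟨i, hi⟩ := Function.ne_iff.mp hv
          simp only [Pi.zero_apply] at hi
          fin_cases i
          · exact absurd (by simpa using hi) (by simp [h0])
          · simpa using hi
        refine ⟨(x 1 - p 1) / v 1, ?_⟩
        funext i
        fin_cases i
        · show x 0 = p 0 + (x 1 - p 1) / v 1 * v 0
          rw [h0] at hx ⊢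
          have hz : v 1 * (x 0 - p 0) = 0 := by linear_combination hx
          have hxp := (mul_eq_zero.mp hz).resolve_left h1
          have : x 0 = p 0 := by linarith
          rw [this]
          ring
        · show x 1 = p 1 + (x 1 - p 1) / v 1 * v 1
          field_simp
          ring

-- ## Decoding a sign pattern into a trace

def corners (t : Fin 2 → ℤ) : Set (ℤ × ℤ) :=
  {(t 0, t 1), (t 0 + 1, t 1), (t 0, t 1 + 1), (t 0 + 1, t 1 + 1)}

def decode (n : ℕ) (σ : ℤ × ℤ → SignType) : Set (Fin 2 → ℤ) :=
  {t | (∀ i, 0 ≤ t i ∧ t i < (n : ℤ)) ∧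
    ∃ u ∈ corners t, ∃ v ∈ corners t, σ u ≤ 0 ∧ 0 ≤ σ v}

lemma corner_bounds {n : ℕ} {t : Fin 2 → ℤ} {u : ℤ × ℤ}
    (hbd : ∀ i, 0 ≤ t i ∧ t i < (n : ℤ)) (hu : u ∈ corners t) :
    u ∈ gIdx n ∧ t 0 ≤ u.1 ∧ u.1 ≤ t 0 + 1 ∧ t 1 ≤ u.2 ∧ u.2 ≤ t 1 + 1 := by
  have h0 := hbd 0
  have h1 := hbd 1
  rw [mem_gIdx]
  simp only [corners, Set.mem_insert_iff, Set.mem_singleton_iff] at hu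
  rcases hu with rfl | rfl | rfl | rfl <;> simp <;> omega

lemma convex_mem {lo hi a b lam : ℝ} (h0 : 0 ≤ lam) (h1 : lam ≤ 1) (ha : lo ≤ a)
    (ha' : a ≤ hi) (hb : lo ≤ b) (hb' : b ≤ hi) :
    lo ≤ (1 - lam) * a + lam * b ∧ (1 - lam) * a + lam * b ≤ hi := by
  constructor <;> nlinarith

lemma trace_eq (n : ℕ) (hn : 1 ≤ n) (A B C : ℝ) :
    lineTrace n {x : Fin 2 → ℝ | A * x 0 + B * x 1 + C = 0} =
      decode n (fullpat n A B C) := by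
  have hn' : (0 : ℝ) < n := by
    have : 0 < n := hn
    exact_mod_cast this
  ext t
  constructor
  · rintro ⟨hbd, x, hxC, hxL⟩
    simp only [mem_setOf_eq] at hxL
    refine ⟨hbd, ?_⟩
    obtain ⟨e0, he0c, he0⟩ : ∃ e : ℤ, (e = t 0 ∨ e = t 0 + 1) ∧ A * ((e : ℝ) / n) ≤ A * x 0 := by
      rcases le_or_gt 0 A with h | h
      · exact ⟨t 0, Or.inl rfl, mul_le_mul_of_nonneg_left (hxC 0).1 h⟩
      · refine ⟨t 0 + 1, Or.inr rfl, ?_⟩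
        have h2 := mul_le_mul_of_nonpos_left (hxC 0).2 h.le
        push_cast
        linarith
    obtain ⟨e1, he1c, he1⟩ : ∃ e : ℤ, (e = t 1 ∨ e = t 1 + 1) ∧ B * ((e : ℝ) / n) ≤ B * x 1 := by
      rcases le_or_gt 0 B with h | h
      · exact ⟨t 1, Or.inl rfl, mul_le_mul_of_nonneg_left (hxC 1).1 h⟩
      · refine ⟨t 1 + 1, Or.inr rfl, ?_⟩
        have h2 := mul_le_mul_of_nonpos_left (hxC 1).2 h.le
        push_cast
        linarith
    obtain ⟨g0, hg0c, hg0⟩ : ∃ e : ℤ, (e = t 0 ∨ e = t 0 + 1) ∧ A * x 0 ≤ A * ((e : ℝ) / n) := by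
      rcases le_or_gt 0 A with h | h
      · refine ⟨t 0 + 1, Or.inr rfl, ?_⟩
        have h2 := mul_le_mul_of_nonneg_left (hxC 0).2 h
        push_cast
        linarith
      · exact ⟨t 0, Or.inl rfl, mul_le_mul_of_nonpos_left (hxC 0).1 h.le⟩
    obtain ⟨g1, hg1c, hg1⟩ : ∃ e : ℤ, (e = t 1 ∨ e = t 1 + 1) ∧ B * x 1 ≤ B * ((e : ℝ) / n) := by
      rcases le_or_gt 0 B with h | h
      · refine ⟨t 1 + 1, Or.inr rfl, ?_⟩
        have h2 := mul_le_mul_of_nonneg_left (hxC 1).2 h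
        push_cast
        linarith
      · exact ⟨t 1, Or.inl rfl, mul_le_mul_of_nonpos_left (hxC 1).1 h.le⟩
    have hucor : ((e0, e1) : ℤ × ℤ) ∈ corners t := by
      rcases he0c with rfl | rfl <;> rcases he1c with rfl | rfl <;> simp [corners]
    have hvcor : ((g0, g1) : ℤ × ℤ) ∈ corners t := by
      rcases hg0c with rfl | rfl <;> rcases hg1c with rfl | rfl <;> simp [corners]
    refine ⟨(e0, e1), hucor, (g0, g1), hvcor, ?_, ?_⟩
    · have hmem := (corner_bounds hbd hucor).1
      simp only [fullpat, if_pos hmem]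
      rw [sign_nonpos_iff]
      show A * ((e0 : ℝ) / n) + B * ((e1 : ℝ) / n) + C ≤ 0
      linarith
    · have hmem := (corner_bounds hbd hvcor).1
      simp only [fullpat, if_pos hmem]
      rw [sign_nonneg_iff]
      show 0 ≤ A * ((g0 : ℝ) / n) + B * ((g1 : ℝ) / n) + C
      linarith
  · rintro ⟨hbd, u, hu, v, hv, hσu, hσv⟩
    refine ⟨hbd, ?_⟩
    obtain ⟨hug, hu1, hu2, hu3, hu4⟩ := corner_bounds hbd hu
    obtain ⟨hvg, hv1, hv2, hv3, hv4⟩ := corner_bounds hbd hv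
    have hfu : A * ((u.1 : ℝ) / n) + B * ((u.2 : ℝ) / n) + C ≤ 0 := by
      have h := hσu
      simp only [fullpat, if_pos hug] at h
      exact sign_nonpos_iff.mp h
    have hfv : 0 ≤ A * ((v.1 : ℝ) / n) + B * ((v.2 : ℝ) / n) + C := by
      have h := hσv
      simp only [fullpat, if_pos hvg] at h
      exact sign_nonneg_iff.mp h
    set fu := A * ((u.1 : ℝ) / n) + B * ((u.2 : ℝ) / n) + C with hfu_def
    set fv := A * ((v.1 : ℝ) / n) + B * ((v.2 : ℝ) / n) + C with hfv_def
    -- cast bounds for corner coordinates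
    have cu1 : (t 0 : ℝ) / n ≤ (u.1 : ℝ) / n := by gcongr <;> exact_mod_cast hu1
    have cu2 : (u.1 : ℝ) / n ≤ ((t 0 : ℝ) + 1) / n := by gcongr <;> exact_mod_cast hu2
    have cu3 : (t 1 : ℝ) / n ≤ (u.2 : ℝ) / n := by gcongr <;> exact_mod_cast hu3
    have cu4 : (u.2 : ℝ) / n ≤ ((t 1 : ℝ) + 1) / n := by gcongr <;> exact_mod_cast hu4
    have cv1 : (t 0 : ℝ) / n ≤ (v.1 : ℝ) / n := by gcongr <;> exact_mod_cast hv1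
    have cv2 : (v.1 : ℝ) / n ≤ ((t 0 : ℝ) + 1) / n := by gcongr <;> exact_mod_cast hv2
    have cv3 : (t 1 : ℝ) / n ≤ (v.2 : ℝ) / n := by gcongr <;> exact_mod_cast hv3
    have cv4 : (v.2 : ℝ) / n ≤ ((t 1 : ℝ) + 1) / n := by gcongr <;> exact_mod_cast hv4
    have hd : 0 ≤ fv - fu := by linarith
    rcases hd.lt_or_eq with hlt | hEq
    · set lam := (-fu) / (fv - fu) with hlam
      have hl0 : 0 ≤ lam := div_nonneg (by linarith) hlt.le
      have hl1 : lam ≤ 1 := (div_le_one hlt).2 (by linarith)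
      set z : Fin 2 → ℝ := ![(1 - lam) * ((u.1 : ℝ) / n) + lam * ((v.1 : ℝ) / n),
        (1 - lam) * ((u.2 : ℝ) / n) + lam * ((v.2 : ℝ) / n)] with hz
      refine ⟨z, ?_, ?_⟩
      · intro i
        fin_cases i
        · show (t 0 : ℝ) / n ≤ z 0 ∧ z 0 ≤ ((t 0 : ℝ) + 1) / n
          simp only [hz, Matrix.cons_val_zero]
          exact convex_mem hl0 hl1 cu1 cu2 cv1 cv2
        · show (t 1 : ℝ) / n ≤ z 1 ∧ z 1 ≤ ((t 1 : ℝ) + 1) / n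
          simp only [hz, Matrix.cons_val_one, Matrix.head_cons]
          exact convex_mem hl0 hl1 cu3 cu4 cv3 cv4
      · show A * z 0 + B * z 1 + C = 0
        have hne : fv - fu ≠ 0 := ne_of_gt hlt
        have expand : A * z 0 + B * z 1 + C = (1 - lam) * fu + lam * fv := by
          simp only [hz, Matrix.cons_val_zero, Matrix.cons_val_one, Matrix.head_cons,
            hfu_def, hfv_def]
          ring
        rw [expand, hlam]
        field_simp
        ring
    · -- fv = fu, hence both are 0; the corner u itself lies on the line
      have hfu0 : fu = 0 := by linarith
      set z : Fin 2 → ℝ := ![(u.1 : ℝ) / n, (u.2 : ℝ) / n] with hz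
      refine ⟨z, ?_, ?_⟩
      · intro i
        fin_cases i
        · show (t 0 : ℝ) / n ≤ z 0 ∧ z 0 ≤ ((t 0 : ℝ) + 1) / n
          simp only [hz, Matrix.cons_val_zero]
          exact ⟨cu1, cu2⟩
        · show (t 1 : ℝ) / n ≤ z 1 ∧ z 1 ≤ ((t 1 : ℝ) + 1) / n
          simp only [hz, Matrix.cons_val_one, Matrix.head_cons]
          exact ⟨cu3, cu4⟩
      · show A * z 0 + B * z 1 + C = 0
        simp only [hz, Matrix.cons_val_zero, Matrix.cons_val_one, Matrix.head_cons]
        rw [hfu_def] at hfu0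
        linarith


end AuxLineTraces

/-- For `n ≥ 1`, the number of line traces in the planar grid `𝒞^2_n` is at most
`(2n)^5`. -/
theorem card_lineTraces_le_plane (n : ℕ) (hn : 1 ≤ n) :
    (lineTraces 2 n).Finite ∧
      (lineTraces 2 n).ncard ≤ (2 * n) ^ 5 := by
  rcases eq_or_lt_of_le hn with h1 | h2
  · -- the case `n = 1`
    have h1' : n = 1 := h1.symm
    subst h1'
    have hkey : ∀ (L : Set (Fin 2 → ℝ)) (t : Fin 2 → ℤ),
        t ∈ lineTrace 1 L → t = fun _ => 0 := by
      rintro L t ⟨hbd, -⟩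
      funext i
      have := hbd i
      simp only [Nat.cast_one] at this
      omega
    have hsub : lineTraces 2 1 ⊆ {({fun _ => 0} : Set (Fin 2 → ℤ))} := by
      rintro S ⟨⟨t₀, ht₀⟩, L, hL, rfl⟩
      simp only [Set.mem_singleton_iff]
      ext t
      simp only [Set.mem_singleton_iff]
      constructor
      · intro ht
        exact hkey L t ht
      · rintro rfl
        exact (hkey L t₀ ht₀) ▸ ht₀
    refine ⟨(Set.finite_singleton _).subset hsub, ?_⟩
    have hle := Set.ncard_le_ncard hsub (Set.finite_singleton _)
    rw [Set.ncard_singleton] at hle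
    calc (lineTraces 2 1).ncard ≤ 1 := hle
      _ ≤ (2 * 1) ^ 5 := by norm_num
  · -- the case `2 ≤ n`
    have h2' : 2 ≤ n := h2
    have hsub : lineTraces 2 n ⊆ decode n '' Omeg n := by
      rintro S ⟨hne, L, hL, rfl⟩
      obtain ⟨A, B, C, hAB, hLeq⟩ := line_rep hL
      refine ⟨fullpat n A B C, fullpat_mem n hn hAB, ?_⟩
      rw [hLeq]
      exact (trace_eq n hn A B C).symm
    obtain ⟨hΩfin, hΩcard⟩ := Omeg_spec n
    refine ⟨(hΩfin.image _).subset hsub, ?_⟩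
    have hb1 := Set.ncard_le_ncard hsub (hΩfin.image _)
    have hb2 := Set.ncard_image_le (f := decode n) hΩfin
    have hb3 : 4 * ((n+1)*(n+1)) * ((n+1)*(n+1)) + 4*((n+1)*(n+1)) + 4 ≤ (2*n)^5 := by
      have ha2 : 2*(n+1) ≤ 3*n := by omega
      have ha4 : (2*(n+1))*(2*(n+1))*((2*(n+1))*(2*(n+1))) ≤ (3*n)*(3*n)*((3*n)*(3*n)) :=
        Nat.mul_le_mul (Nat.mul_le_mul ha2 ha2) (Nat.mul_le_mul ha2 ha2)
      have hA : 2*(n*n*n*n) ≤ n*(n*n*n*n) := Nat.mul_le_mul_right _ h2'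
      have hB : 2*(n*n) ≤ n*(n*n) := Nat.mul_le_mul_right _ h2'
      have hC : 2*n ≤ n*n := Nat.mul_le_mul_right _ h2'
      nlinarith [ha4, hA, hB, hC]
    omega
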